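/- Let L1 = ([a_1,b_1],...,[a_m,b_m]) and L2 = ([c_1,d_1],...,[c_n,d_n]) be sequences of intervals of nonnegative integers with b_1 ≥ ... ≥ b_m and d_1 ≥ ... ≥ d_n. Suppose that for each k with 1 ≤ k ≤ m, Σ_{i=1}^k b_i ≤ Σ_{i=1}^n min{c_i, k}, and for each l with 1 ≤ l ≤ n, Σ_{i=1}^l d_i ≤ Σ_{i=1}^m min{a_i, l}. Then every pair (P;Q) with P = (p_1,...,p_m), Q = (q_1,...,q_n), a_i ≤ p_i ≤ b_i for 1 ≤ i ≤ m, c_j ≤ q_j ≤ d_j for 1 ≤ j ≤ n, and Σ_{i=1}^m p_i = Σ_{j=1}^n q_j, is bigraphic. -/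

import Mathlib

open Finset


/-- `Bigraphic p q`: there is a simple bipartite graph with parts of sizes `m` and `n`
whose degree sequences on the two parts are `p` and `q`, encoded via a 0/1
biadjacency matrix. -/
def Bigraphic {m n : ℕ} (p : Fin m → ℕ) (q : Fin n → ℕ) : Prop :=
  ∃ M : Fin m → Fin n → Bool,
    (∀ i, (∑ j, if M i j then 1 else 0) = p i) ∧
    (∀ j, (∑ i, if M i j then 1 else 0) = q j)

lemma strictMono_fin_le {s : ℕ} {g : Fin s → ℕ} (hg : StrictMono g) : ∀ t : Fin s, (t : ℕ) ≤ g t := by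
  have H : ∀ t (ht : t < s), t ≤ g ⟨t, ht⟩ := by
    intro t
    induction t with
    | zero => intro ht; exact Nat.zero_le _
    | succ u ih =>
      intro ht
      have hu : u < s := Nat.lt_of_succ_lt ht
      have h1 : g ⟨u, hu⟩ < g ⟨u+1, ht⟩ := hg (by simp [Fin.lt_def])
      have h2 := ih hu
      omega
  intro t
  exact H t.1 t.2

lemma antitone_sum_subset_le {m : ℕ} {b : Fin m → ℕ} (hb : Antitone b) (S : Finset (Fin m)) :
    ∑ i ∈ S, b i ≤ ∑ i : Fin m, if (i : ℕ) < S.card then b i else 0 := by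
  have hsm : S.card ≤ m := by
    have := S.card_le_univ
    simpa using this
  set s := S.card with hs
  set f := S.orderEmbOfFin hs.symm with hf
  have himg : Finset.image f univ = S := by
    apply Finset.coe_injective
    rw [coe_image, coe_univ, Set.image_univ]
    exact Finset.range_orderEmbOfFin S hs.symm
  have hL : ∑ i ∈ S, b i = ∑ t : Fin s, b (f t) := by
    rw [← himg, Finset.sum_image (fun x _ y _ h => f.injective h)]
  have hR : ∑ i : Fin m, (if (i : ℕ) < s then b i else 0) = ∑ t : Fin s, b (Fin.castLE hsm t) := by
    rw [← Finset.sum_filter]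
    have himg2 : univ.filter (fun i : Fin m => (i : ℕ) < s) = Finset.image (Fin.castLE hsm) univ := by
      ext i
      simp only [mem_filter, mem_univ, true_and, mem_image]
      constructor
      · intro h
        exact ⟨⟨i, h⟩, rfl⟩
      · rintro ⟨t, rfl⟩
        exact t.2
    rw [himg2, Finset.sum_image (fun x _ y _ h => by simpa [Fin.ext_iff] using h)]
  rw [hL, hR]
  apply Finset.sum_le_sum
  intro t _
  apply hb
  rw [Fin.le_def]
  exact strictMono_fin_le (fun x y hxy => by exact_mod_cast f.strictMono hxy) t

theorem gale_ryser : ∀ (m : ℕ) {n : ℕ} (p : Fin m → ℕ) (q : Fin n → ℕ),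
    (∑ i, p i) = (∑ j, q j) →
    (∀ S : Finset (Fin m), ∑ i ∈ S, p i ≤ ∑ j, min (q j) S.card) →
    ∃ M : Fin m → Fin n → Bool,
      (∀ i, (∑ j, if M i j then 1 else 0) = p i) ∧
      (∀ j, (∑ i, if M i j then 1 else 0) = q j) := by
  intro m
  induction m with
  | zero =>
    intro n p q hsum _
    refine ⟨fun i => i.elim0, fun i => i.elim0, fun j => ?_⟩
    have h0 : ∑ j, q j = 0 := by simpa using hsum.symm
    have := (Finset.sum_eq_zero_iff.mp h0) j (mem_univ j)
    simpa using this.symm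
  | succ m ih =>
    intro n p q hsum hGR
    obtain ⟨i0, -, hi0⟩ := Finset.exists_max_image univ p ⟨0, mem_univ 0⟩
    set k := p i0 with hk
    set G := univ.filter (fun j : Fin n => 1 ≤ q j) with hG
    -- k ≤ |G|
    have hkG : k ≤ G.card := by
      have h := hGR {i0}
      rw [card_singleton, sum_singleton] at h
      have h2 : ∑ j : Fin n, min (q j) 1 = G.card := by
        rw [hG, Finset.card_filter]
        refine Finset.sum_congr rfl (fun j _ => ?_)
        rcases Nat.eq_zero_or_pos (q j) with h | h
        · simp [h]
        · have h1 : 1 ≤ q j := h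
          rw [if_pos h1, min_eq_right h1]
      rw [h2] at h
      exact h
    -- choose a max-sum k-subset T of G
    have hne : (G.powerset.filter (fun T => T.card = k)).Nonempty := by
      obtain ⟨T, hTG, hTc⟩ := Finset.exists_subset_card_eq hkG
      exact ⟨T, by simp [mem_powerset, hTG, hTc]⟩
    obtain ⟨T, hTmem, hTmax⟩ :=
      Finset.exists_max_image (G.powerset.filter (fun T => T.card = k)) (fun T => ∑ j ∈ T, q j) hne
    rw [mem_filter, mem_powerset] at hTmem
    obtain ⟨hTG, hTcard⟩ := hTmem
    have hT1 : ∀ j ∈ T, 1 ≤ q j := fun j hj => (mem_filter.mp (hTG hj)).2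
    -- key: T consists of columns with maximal q-values
    have hkey : ∀ j ∈ T, ∀ j', j' ∉ T → q j' ≤ q j := by
      intro j hj j' hj'
      by_contra hcon
      push_neg at hcon
      have hj'G : j' ∈ G := by
        rw [hG, mem_filter]
        exact ⟨mem_univ _, le_trans (hT1 j hj) hcon.le⟩
      set T' := insert j' (T.erase j) with hT'
      have hj'e : j' ∉ T.erase j := fun h => hj' (mem_of_mem_erase h)
      have hT'G : T' ⊆ G := by
        intro x hx
        rcases mem_insert.mp hx with rfl | hx
        · exact hj'G
        · exact hTG (mem_of_mem_erase hx)
      have hT'card : T'.card = k := by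
        rw [hT', card_insert_of_notMem hj'e, card_erase_of_mem hj, hTcard]
        have : 1 ≤ k := by rw [← hTcard]; exact card_pos.mpr ⟨j, hj⟩
        omega
      have hT'mem : T' ∈ G.powerset.filter (fun T => T.card = k) := by
        rw [mem_filter, mem_powerset]; exact ⟨hT'G, hT'card⟩
      have hlt : ∑ x ∈ T, q x < ∑ x ∈ T', q x := by
        rw [hT', sum_insert hj'e, ← Finset.add_sum_erase T q hj]
        exact Nat.add_lt_add_right hcon _
      exact absurd (hTmax T' hT'mem) (not_le.mpr hlt)
    -- reduced sequences
    set q' : Fin n → ℕ := fun j => if j ∈ T then q j - 1 else q j with hq'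
    set p' : Fin m → ℕ := fun i => p (i0.succAbove i) with hp'
    have hq'sum : ∑ j, q' j + k = ∑ j, q j := by
      have : ∀ j : Fin n, q' j + (if j ∈ T then 1 else 0) = q j := by
        intro j
        by_cases hj : j ∈ T
        · have := hT1 j hj; simp [hq', hj]; omega
        · simp [hq', hj]
      calc ∑ j, q' j + k = ∑ j, (q' j + if j ∈ T then 1 else 0) := by
            rw [Finset.sum_add_distrib]
            congr 1
            rw [Finset.sum_ite_mem, univ_inter, Finset.sum_const, hTcard, smul_eq_mul, mul_one]
        _ = ∑ j, q j := Finset.sum_congr rfl (fun j _ => this j)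
    have hp'sum : k + ∑ i, p' i = ∑ i, p i := (Fin.sum_univ_succAbove p i0).symm
    have hsum' : ∑ i, p' i = ∑ j, q' j := by omega
    -- Gale-Ryser condition for reduced sequences
    have hGR' : ∀ S : Finset (Fin m), ∑ i ∈ S, p' i ≤ ∑ j, min (q' j) S.card := by
      intro S
      set s := S.card with hs
      by_cases hcase : ∃ j0, j0 ∉ T ∧ s + 1 ≤ q j0
      · -- case B: some column outside T is big, so all of T is big
        obtain ⟨j0, hj0T, hj0⟩ := hcase
        have hTbig : ∀ j ∈ T, s + 1 ≤ q j := fun j hj => le_trans hj0 (hkey j hj j0 hj0T)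
        calc ∑ i ∈ S, p' i ≤ ∑ _i ∈ S, k := sum_le_sum (fun i _ => hi0 _ (mem_univ _))
          _ = s * k := by rw [sum_const, smul_eq_mul]
          _ = ∑ _j ∈ T, s := by rw [sum_const, hTcard, smul_eq_mul, mul_comm]
          _ ≤ ∑ j ∈ T, min (q' j) s := by
              refine sum_le_sum (fun j hj => ?_)
              have h1 := hTbig j hj
              have h2 : s ≤ q j - 1 := by omega
              simp [hq', hj, Nat.min_eq_right h2]
          _ ≤ ∑ j, min (q' j) s := sum_le_sum_of_subset (subset_univ T)
      · -- case A
        push_neg at hcase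
        have hsmall : ∀ j, j ∉ T → q j ≤ s := fun j hj => by
          have := hcase j hj; omega
        set emb : Fin m ↪ Fin (m+1) := ⟨i0.succAbove, Fin.succAbove_right_injective⟩ with hemb
        have hi0S : i0 ∉ S.map emb := by
          rw [mem_map]
          rintro ⟨i, -, hi⟩
          exact Fin.succAbove_ne i0 i hi
        have h1 := hGR (insert i0 (S.map emb))
        rw [card_insert_of_notMem hi0S, card_map, sum_insert hi0S, sum_map] at h1
        have h1' : k + ∑ i ∈ S, p' i ≤ ∑ j, min (q j) (s + 1) := h1
        have h2 : ∑ j : Fin n, min (q j) (s + 1) ≤ k + ∑ j, min (q' j) s := by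
          have hterm : ∀ j : Fin n, min (q j) (s+1) ≤ (if j ∈ T then 1 else 0) + min (q' j) s := by
            intro j
            by_cases hj : j ∈ T
            · have h1q := hT1 j hj
              simp only [hq', hj, if_pos]
              rcases le_or_gt (q j) s with h | h
              · rw [min_eq_left (by omega : q j ≤ s + 1),
                  min_eq_left (by omega : q j - 1 ≤ s)]
                omega
              · rw [min_eq_right (by omega : s + 1 ≤ q j),
                  min_eq_right (by omega : s ≤ q j - 1)]
                omega
            · have := hsmall j hj
              simp only [hq', hj, if_neg, if_false]
              rw [min_eq_left (by omega : q j ≤ s + 1), min_eq_left (by omega : q j ≤ s)]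
              omega
          calc ∑ j : Fin n, min (q j) (s+1)
              ≤ ∑ j : Fin n, ((if j ∈ T then 1 else 0) + min (q' j) s) :=
                sum_le_sum (fun j _ => hterm j)
            _ = k + ∑ j, min (q' j) s := by
                rw [Finset.sum_add_distrib, Finset.sum_ite_mem, univ_inter, Finset.sum_const,
                  hTcard, smul_eq_mul, mul_one]
        omega
    obtain ⟨M', hrow, hcol⟩ := ih p' q' hsum' hGR'
    set M : Fin (m+1) → Fin n → Bool :=
      i0.insertNth (α := fun _ => Fin n → Bool) (fun j => decide (j ∈ T)) M' with hM
    have hMsame : M i0 = fun j => decide (j ∈ T) :=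
      Fin.insertNth_apply_same (α := fun _ => Fin n → Bool) i0 _ M'
    have hMsucc : ∀ i', M (i0.succAbove i') = M' i' := fun i' =>
      Fin.insertNth_apply_succAbove (α := fun _ => Fin n → Bool) i0 _ M' i'
    refine ⟨M, ?_, ?_⟩
    · intro i
      rcases eq_or_ne i i0 with rfl | hi
      · rw [hMsame]
        have hTc : ∑ j : Fin n, (if decide (j ∈ T) = true then 1 else 0) = T.card := by
          simp only [decide_eq_true_eq]
          rw [Finset.sum_ite_mem, univ_inter, Finset.sum_const, smul_eq_mul, mul_one]
        rw [hTc, hTcard]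
      · obtain ⟨i', rfl⟩ := Fin.exists_succAbove_eq hi
        rw [hMsucc]
        exact hrow i'
    · intro j
      rw [Fin.sum_univ_succAbove (fun i => if M i j then 1 else 0) i0]
      simp only [hMsame, hMsucc]
      rw [hcol j]
      by_cases hj : j ∈ T
      · have := hT1 j hj
        simp only [hq', hj, if_pos, decide_eq_true_eq, if_true]
        omega
      · simp [hj, hq']

/-- Theorem 1.3: optimal sufficient condition for a forcibly bigraphic pair. -/
theorem thm_1_3 {m n : ℕ} (a b : Fin m → ℕ) (c d : Fin n → ℕ)
    (hb : Antitone b) (hd : Antitone d)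
    (hab : ∀ i, a i ≤ b i) (hcd : ∀ j, c j ≤ d j)
    (h2 : ∀ k : ℕ, 1 ≤ k → k ≤ m →
      (∑ i : Fin m, if (i : ℕ) < k then b i else 0) ≤ ∑ i : Fin n, min (c i) k)
    (h3 : ∀ l : ℕ, 1 ≤ l → l ≤ n →
      (∑ i : Fin n, if (i : ℕ) < l then d i else 0) ≤ ∑ i : Fin m, min (a i) l) :
    ∀ (p : Fin m → ℕ) (q : Fin n → ℕ),
      (∀ i, a i ≤ p i ∧ p i ≤ b i) → (∀ j, c j ≤ q j ∧ q j ≤ d j) →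
      (∑ i, p i) = (∑ j, q j) → Bigraphic p q := by
  intro p q hp hq hsum
  apply gale_ryser m p q hsum
  intro S
  rcases Nat.eq_zero_or_pos S.card with h0 | h1
  · have hS : S = ∅ := card_eq_zero.mp h0
    simp [hS]
  · have hSm : S.card ≤ m := by
      have := S.card_le_univ
      simpa using this
    calc ∑ i ∈ S, p i ≤ ∑ i ∈ S, b i := sum_le_sum (fun i _ => (hp i).2)
      _ ≤ ∑ i : Fin m, if (i : ℕ) < S.card then b i else 0 := antitone_sum_subset_le hb S
      _ ≤ ∑ j, min (c j) S.card := h2 S.card h1 hSm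
      _ ≤ ∑ j, min (q j) S.card := sum_le_sum (fun j _ => min_le_min (hq j).1 le_rfl)
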